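/- Let A and L be positive bounded operators on a real separable Hilbert space H and λ > 0. If ‖(L + λI)^{-1/2}(L − A)(L + λI)^{-1/2}‖ ≤ 1/4 and ‖(L + λI)^{1/2}(A + λI)^{-1/2}‖ ≤ √2, then ‖(A + λI)^{1/2}(L + λI)^{-1}(A + λI)^{1/2}‖ ≤ 2 and consequently ‖(L + λI)^{-1/2}(A + λI)^{1/2}‖ ≤ √2. -/

import Mathlib

open ContinuousLinearMap

/-- `S` is the positive square root of the positive operator `T`. -/
def IsSqrtOf {E : Type*} [NormedAddCommGroup E] [InnerProductSpace ℝ E]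
    [CompleteSpace E] (S T : E →L[ℝ] E) : Prop :=
  S.IsPositive ∧ S ∘L S = T

/-- `S` is the inverse `T⁻¹` of the operator `T`. -/
def IsInvOf {E : Type*} [NormedAddCommGroup E] [InnerProductSpace ℝ E]
    [CompleteSpace E] (S T : E →L[ℝ] E) : Prop :=
  S ∘L T = 1 ∧ T ∘L S = 1

/-- `S` is the inverse square root `T^{-1/2}` of the positive invertible operator `T`,
i.e. `S` is positive and `S ∘ S = T⁻¹`. -/
def IsInvSqrtOf {E : Type*} [NormedAddCommGroup E] [InnerProductSpace ℝ E]
    [CompleteSpace E] (S T : E →L[ℝ] E) : Prop :=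
  S.IsPositive ∧ IsInvOf (S ∘L S) T

/-- `p` is the family of real powers `t ↦ A ^ t` (for `t ≥ 0`) of the positive operator `A`,
given by the continuous functional calculus; it is characterized by the semigroup property
together with positivity, continuity, `p 0 = 1` and `p 1 = A`. -/
def IsPowerFamilyOf {E : Type*} [NormedAddCommGroup E] [InnerProductSpace ℝ E]
    [CompleteSpace E] (A : E →L[ℝ] E) (p : ℝ → E →L[ℝ] E) : Prop :=
  p 0 = 1 ∧ p 1 = A ∧ (∀ s t : ℝ, 0 ≤ s → 0 ≤ t → p (s + t) = p s ∘L p t) ∧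
    (∀ t : ℝ, 0 ≤ t → (p t).IsPositive) ∧ ContinuousOn p (Set.Ici (0 : ℝ))

/-- For positive operators `A`, `L` on `H` and `lam > 0`, if
`‖(L + lam I)^{-1/2}(L − A)(L + lam I)^{-1/2}‖ ≤ 1/4` and
`‖(L + lam I)^{1/2}(A + lam I)^{-1/2}‖ ≤ √2`, then
`‖(A + lam I)^{1/2}(L + lam I)⁻¹(A + lam I)^{1/2}‖ ≤ 2` and consequently
`‖(L + lam I)^{-1/2}(A + lam I)^{1/2}‖ ≤ √2`. -/
theorem stmt10 {H : Type*} [NormedAddCommGroup H] [InnerProductSpace ℝ H] [CompleteSpace H]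
    [TopologicalSpace.SeparableSpace H]
    (A L : H →L[ℝ] H) (hA : A.IsPositive) (hL : L.IsPositive)
    (lam : ℝ) (hlam : 0 < lam)
    (SA : H →L[ℝ] H) (hSA : IsSqrtOf SA (A + lam • (1 : H →L[ℝ] H)))
    (SAinv : H →L[ℝ] H) (hSAinv : IsInvSqrtOf SAinv (A + lam • (1 : H →L[ℝ] H)))
    (SL : H →L[ℝ] H) (hSL : IsSqrtOf SL (L + lam • (1 : H →L[ℝ] H)))
    (SLinv : H →L[ℝ] H) (hSLinv : IsInvSqrtOf SLinv (L + lam • (1 : H →L[ℝ] H)))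
    (Linv : H →L[ℝ] H) (hLinv : IsInvOf Linv (L + lam • (1 : H →L[ℝ] H)))
    (h1 : ‖SLinv ∘L (L - A) ∘L SLinv‖ ≤ 1 / 4)
    (h2 : ‖SL ∘L SAinv‖ ≤ Real.sqrt 2) :
    ‖SA ∘L Linv ∘L SA‖ ≤ 2 ∧ ‖SLinv ∘L SA‖ ≤ Real.sqrt 2 := by
  set T : H →L[ℝ] H := L + lam • (1 : H →L[ℝ] H) with hT
  have hPT : SLinv * SLinv * T = 1 := hSLinv.2.1
  have hTP : T * (SLinv * SLinv) = 1 := hSLinv.2.2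
  -- SLinv commutes with T
  have comm : T * SLinv = SLinv * T := by
    have h : T * SLinv * (SLinv * SLinv * T) = T * (SLinv * SLinv) * (SLinv * T) := by
      simp only [mul_assoc]
    rwa [hPT, hTP, mul_one, one_mul] at h
  have key1 : SLinv * T * SLinv = 1 := by
    rw [mul_assoc, comm, ← mul_assoc, hPT]
  -- Linv = SLinv * SLinv
  have hLinvEq : Linv = SLinv * SLinv := by
    have h : Linv * (T * (SLinv * SLinv)) = Linv * T * (SLinv * SLinv) := by
      simp only [mul_assoc]
    have hLT : Linv * T = 1 := hLinv.1
    rw [hTP, mul_one, hLT, one_mul] at h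
    exact h
  -- adjoints
  have hSAadj : ContinuousLinearMap.adjoint SA = SA := hSA.1.isSelfAdjoint
  have hSLinvadj : ContinuousLinearMap.adjoint SLinv = SLinv := hSLinv.1.isSelfAdjoint
  set X : H →L[ℝ] H := SLinv ∘L SA with hX
  have hXadj : ContinuousLinearMap.adjoint X = SA ∘L SLinv := by
    rw [hX, ContinuousLinearMap.adjoint_comp, hSAadj, hSLinvadj]
  -- E = X * adjoint X = SLinv * (A + lam•1) * SLinv
  have hE : X ∘L ContinuousLinearMap.adjoint X = 1 - SLinv ∘L (L - A) ∘L SLinv := by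
    rw [hXadj]
    have h1' : (SLinv ∘L SA) ∘L (SA ∘L SLinv) = SLinv ∘L (SA ∘L SA) ∘L SLinv := by
      simp only [ContinuousLinearMap.comp_assoc]
    rw [h1', hSA.2]
    have h2' : A + lam • (1 : H →L[ℝ] H) = T - (L - A) := by
      rw [hT]; abel
    rw [h2']
    have h3' : SLinv ∘L (T - (L - A)) ∘L SLinv
        = SLinv ∘L T ∘L SLinv - SLinv ∘L (L - A) ∘L SLinv := by
      simp only [ContinuousLinearMap.comp_sub, ContinuousLinearMap.sub_comp]
    have key1' : SLinv ∘L T ∘L SLinv = 1 := by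
      have h := key1
      rw [mul_assoc] at h
      exact h
    rw [h3', key1']
  have hEnorm : ‖X ∘L ContinuousLinearMap.adjoint X‖ ≤ 5 / 4 := by
    rw [hE]
    calc ‖(1 : H →L[ℝ] H) - SLinv ∘L (L - A) ∘L SLinv‖
        ≤ ‖(1 : H →L[ℝ] H)‖ + ‖SLinv ∘L (L - A) ∘L SLinv‖ := norm_sub_le _ _
      _ ≤ 1 + 1 / 4 := add_le_add ContinuousLinearMap.norm_id_le h1
      _ = 5 / 4 := by norm_num
  have hXsq : ‖X‖ * ‖X‖ ≤ 5 / 4 := by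
    have := ContinuousLinearMap.norm_adjoint_comp_self (ContinuousLinearMap.adjoint X)
    rw [ContinuousLinearMap.adjoint_adjoint] at this
    have hnn : ‖ContinuousLinearMap.adjoint X‖ = ‖X‖ :=
      LinearIsometryEquiv.norm_map ContinuousLinearMap.adjoint X
    calc ‖X‖ * ‖X‖ = ‖ContinuousLinearMap.adjoint X‖ * ‖ContinuousLinearMap.adjoint X‖ := by
          rw [hnn]
      _ = ‖X ∘L ContinuousLinearMap.adjoint X‖ := this.symm
      _ ≤ 5 / 4 := hEnorm
  constructor
  · have hF : SA ∘L Linv ∘L SA = ContinuousLinearMap.adjoint X ∘L X := by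
      rw [hXadj, hLinvEq]
      simp only [ContinuousLinearMap.mul_def, ContinuousLinearMap.comp_assoc, hX]
    rw [hF, ContinuousLinearMap.norm_adjoint_comp_self]
    linarith
  · have h2 : ‖X‖ ^ 2 ≤ 2 := by nlinarith [norm_nonneg X]
    have := Real.sqrt_le_sqrt h2
    rwa [Real.sqrt_sq (norm_nonneg X)] at this
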